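/- Let L, U : 𝒟 → ℝ with the property that for every D ∈ 𝒟 there exists D* ∈ 𝒟 with L(D*) = L(D) and U(D*) ≥ U(D') for all D' ∈ 𝒟. Then sup_D (L(D) + U(D)) = sup_D L(D) + sup_D U(D), and if D_L maximizes L, there exists D* maximizing L + U with L(D*) = L(D_L). -/

import Mathlib

/-- Proposition 1 (1), abstractly: under the interchange property, the
supremum of `L + U` decouples as `sup L + sup U`, and any maximizer of `L`
lifts to a maximizer of `L + U` with the same supervised value. -/
theorem sup_sum_decouples
    {𝒟 : Type*} [Nonempty 𝒟] (L U : 𝒟 → ℝ)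
    (hLbdd : BddAbove (Set.range L)) (hUbdd : BddAbove (Set.range U))
    (hJbdd : BddAbove (Set.range fun D => L D + U D))
    (hinter : ∀ D : 𝒟, ∃ Dstar : 𝒟, L Dstar = L D ∧ ∀ D' : 𝒟, U D' ≤ U Dstar) :
    (⨆ D : 𝒟, (L D + U D)) = (⨆ D : 𝒟, L D) + ⨆ D : 𝒟, U D ∧
    ∀ DL : 𝒟, (∀ D : 𝒟, L D ≤ L DL) →
      ∃ Dstar : 𝒟, (∀ D : 𝒟, L D + U D ≤ L Dstar + U Dstar) ∧ L Dstar = L DL := by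
  obtain ⟨D0⟩ := ‹Nonempty 𝒟›
  obtain ⟨Dm, -, hDm⟩ := hinter D0
  have hsupU : (⨆ D : 𝒟, U D) = U Dm :=
    le_antisymm (ciSup_le hDm) (le_ciSup hUbdd Dm)
  constructor
  · apply le_antisymm
    · refine ciSup_le fun D => add_le_add (le_ciSup hLbdd D) (le_ciSup hUbdd D)
    · rw [hsupU]
      have h : ∀ D : 𝒟, L D + U Dm ≤ ⨆ D : 𝒟, (L D + U D) := by
        intro D
        obtain ⟨D1, hL1, hU1⟩ := hinter D
        calc L D + U Dm = L D1 + U Dm := by rw [hL1]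
          _ ≤ L D1 + U D1 := add_le_add_right (hU1 Dm) _
          _ ≤ ⨆ D : 𝒟, (L D + U D) := le_ciSup hJbdd D1
      have := ciSup_le (f := fun D => L D + U Dm) fun D => h D
      calc (⨆ D : 𝒟, L D) + U Dm = ⨆ D : 𝒟, (L D + U Dm) := by
            rw [← ciSup_add hLbdd]
        _ ≤ ⨆ D : 𝒟, (L D + U D) := this
  · intro DL hDL
    obtain ⟨Dstar, hLs, hUs⟩ := hinter DL
    exact ⟨Dstar, fun D => add_le_add (hLs ▸ hDL D) (hUs D), hLs⟩
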